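/- Let G be a finite abelian group with uniform measure μ, let f : G → [0,∞) be a density (E_μ f = 1), let δ > 0, and let Λ ⊆ Spec_δ(f) be disassociated. Then |Λ| ≤ 4 Ent_μ(f)/δ². -/

import Mathlib

open Finset Complex



private lemma young_ineq (a b : ℝ) (ha : 0 ≤ a) :
    a * b ≤ a * Real.log a + Real.exp (b - 1) := by
  rcases ha.eq_or_lt with h | h
  · rw [← h]; simpa using (Real.exp_pos (b-1)).le
  · have h1 : b - Real.log a ≤ Real.exp (b - Real.log a - 1) := by
      have := Real.add_one_le_exp (b - Real.log a - 1); linarith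
    have h2 : a * (b - Real.log a) ≤ a * Real.exp (b - Real.log a - 1) :=
      mul_le_mul_of_nonneg_left h1 h.le
    have h3 : a * Real.exp (b - Real.log a - 1) = Real.exp (b - 1) := by
      nth_rewrite 1 [← Real.exp_log h]
      rw [← Real.exp_add]; congr 1; ring
    calc a * b = a * (b - Real.log a) + a * Real.log a := by ring
      _ ≤ Real.exp (b - 1) + a * Real.log a := by rw [h3] at h2; linarith
      _ = _ := by ring

private lemma exp_mul_le_cosh (t s : ℝ) (hs : |s| ≤ 1) :
    Real.exp (t * s) ≤ Real.cosh t + s * Real.sinh t := by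
  rw [abs_le] at hs
  have h1 : (0:ℝ) ≤ (1 + s)/2 := by linarith [hs.1]
  have h2 : (0:ℝ) ≤ (1 - s)/2 := by linarith [hs.2]
  have key := convexOn_exp.2 (Set.mem_univ t) (Set.mem_univ (-t)) h1 h2 (by ring)
  simp only [smul_eq_mul] at key
  have heq : (1+s)/2 * t + (1-s)/2 * (-t) = t * s := by ring
  rw [heq] at key
  rw [Real.cosh_eq, Real.sinh_eq]
  calc Real.exp (t*s) ≤ (1+s)/2 * Real.exp t + (1-s)/2 * Real.exp (-t) := key
    _ = _ := by ring

private lemma mul_log_lb (x : ℝ) (hx : 0 ≤ x) : x - 1 ≤ x * Real.log x := by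
  rcases hx.eq_or_lt with h | h
  · rw [← h]; simp
  · have h1 : Real.log x⁻¹ ≤ x⁻¹ - 1 := Real.log_le_sub_one_of_pos (by positivity)
    rw [Real.log_inv] at h1
    have h2 : x * (-Real.log x) ≤ x * (x⁻¹ - 1) := mul_le_mul_of_nonneg_left h1 h.le
    have h3 : x * (x⁻¹ - 1) = 1 - x := by field_simp
    nlinarith


private lemma u_prod {G A : Type*} (u : A → G → ℂ)
    [AddCommMonoid A]
    (hmul : ∀ γ γ' x, u (γ + γ') x = u γ x * u γ' x) (hone : ∀ x, u 0 x = 1)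
    {ι : Type*} (s : Finset ι) (g : ι → A) (x : G) :
    ∏ i ∈ s, u (g i) x = u (∑ i ∈ s, g i) x := by
  induction s using Finset.cons_induction with
  | empty => simp [hone]
  | cons i s hi ih => rw [Finset.prod_cons, Finset.sum_cons, hmul, ih]

private lemma expand_sum {G A : Type*} [Fintype G] [AddCommGroup A] [DecidableEq A]
    (u : A → G → ℂ)
    (hmul : ∀ γ γ' x, u (γ + γ') x = u γ x * u γ' x)
    (hone : ∀ x, u 0 x = 1)
    (horth : ∀ γ : A, γ ≠ 0 → ∑ x, u γ x = 0)
    (Λ : Finset A)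
    (hdis : ∀ ε : A → ℤ, (∀ lam ∈ Λ, ε lam ∈ ({-1, 0, 1} : Set ℤ)) →
      ∑ lam ∈ Λ, ε lam • lam = 0 → ∀ lam ∈ Λ, ε lam = 0)
    (α β β' : A → ℂ) :
    ∑ x, ∏ γ ∈ Λ, (α γ + β γ * u γ x + β' γ * u (-γ) x)
      = (Fintype.card G : ℂ) * ∏ γ ∈ Λ, α γ := by
  classical
  set D : Finset ℤ := {-1, 0, 1} with hDdef
  set coef : A → ℤ → ℂ := fun γ d => if d = 1 then β γ else if d = -1 then β' γ else α γ
    with hcoef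
  -- rewrite each factor as a sum over D
  have hfac : ∀ γ x, α γ + β γ * u γ x + β' γ * u (-γ) x
      = ∑ d ∈ D, coef γ d * u (d • γ) x := by
    intro γ x
    rw [show D = insert (-1 : ℤ) (insert 0 {1}) from rfl,
      Finset.sum_insert (by decide), Finset.sum_insert (by decide), Finset.sum_singleton]
    simp only [hcoef, neg_smul, one_smul, zero_smul, hone]
    norm_num
    ring
  simp only [hfac, Finset.prod_sum]
  rw [Finset.sum_comm]
  -- now a sum over p ∈ Λ.pi (fun _ => D)
  have hterm : ∀ p ∈ Λ.pi (fun _ => D),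
      ∑ x : G, ∏ γ ∈ Λ.attach, coef γ.1 (p γ.1 γ.2) * u ((p γ.1 γ.2) • γ.1) x
        = (∏ γ ∈ Λ.attach, coef γ.1 (p γ.1 γ.2))
            * ∑ x : G, u (∑ γ ∈ Λ.attach, (p γ.1 γ.2) • γ.1) x := by
    intro p _
    rw [Finset.mul_sum]
    refine Finset.sum_congr rfl fun x _ => ?_
    rw [Finset.prod_mul_distrib, u_prod u hmul hone]
  rw [Finset.sum_congr rfl hterm]
  -- the constant-zero element of the pi set
  have hp₀mem : (fun a _ => (0:ℤ)) ∈ Λ.pi (fun _ => D) :=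
    Finset.mem_pi.2 fun a _ => by decide
  rw [Finset.sum_eq_single_of_mem _ hp₀mem]
  · simp only [zero_smul, Finset.sum_const, smul_zero, hone]
    have h1 : ∀ γ ∈ Λ.attach, coef γ.1 (0:ℤ) = α γ.1 := fun γ _ => by simp [hcoef]
    rw [Finset.prod_congr rfl h1, Finset.prod_attach Λ α]
    simp [mul_comm]
  · intro p hp hne
    by_cases hS : (∑ γ ∈ Λ.attach, (p γ.1 γ.2) • γ.1) = 0
    · -- dissociativity forces p = 0, contradicting hne
      exfalso
      set ε : A → ℤ := fun a => if h : a ∈ Λ then p a h else 0 with hε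
      have hsum : ∑ lam ∈ Λ, ε lam • lam = ∑ γ ∈ Λ.attach, (p γ.1 γ.2) • γ.1 := by
        rw [← Finset.sum_attach Λ (fun a => ε a • a)]
        exact Finset.sum_congr rfl fun γ _ => by simp [hε, γ.2]
      have hvals : ∀ lam ∈ Λ, ε lam ∈ ({-1, 0, 1} : Set ℤ) := by
        intro lam hlam
        have := Finset.mem_pi.1 hp lam hlam
        simp only [hDdef, Finset.mem_insert, Finset.mem_singleton] at this
        simp only [hε, dif_pos hlam, Set.mem_insert_iff, Set.mem_singleton_iff]
        tauto
      have hzero := hdis ε hvals (by rw [hsum]; exact hS)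
      apply hne
      funext a h
      have h2 : ε a = 0 := hzero a h
      rw [hε] at h2
      simpa [h] using h2
    · rw [horth _ hS, mul_zero]


/-- Rudin/Chang bound: if `f` is a density on a finite abelian group `G` with
uniform measure and `Λ ⊆ Spec_δ(f)` is disassociated, then
`|Λ| ≤ 4 Ent_μ(f) / δ²`. -/
theorem dissociated_in_spectrum_card_bound
    {G A : Type*} [Fintype G] [Nonempty G] [AddCommGroup A] [DecidableEq A]
    (u : A → G → ℂ)
    (hmul : ∀ γ γ' x, u (γ + γ') x = u γ x * u γ' x)
    (hone : ∀ x, u 0 x = 1)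
    (hconj : ∀ γ x, u (-γ) x = (starRingEnd ℂ) (u γ x))
    (hnorm : ∀ γ x, ‖u γ x‖ = 1)
    (horth : ∀ γ : A, γ ≠ 0 → ∑ x, u γ x = 0)
    (f : G → ℝ) (hf0 : ∀ x, 0 ≤ f x)
    (hf1 : (∑ x, f x) / (Fintype.card G) = 1)
    (δ : ℝ) (hδ : 0 < δ)
    (Λ : Finset A)
    (hΛspec : ∀ γ ∈ Λ,
      ‖(∑ x, (f x : ℂ) * (starRingEnd ℂ) (u γ x)) / (Fintype.card G : ℂ)‖ > δ)
    (hdis : ∀ ε : A → ℤ, (∀ lam ∈ Λ, ε lam ∈ ({-1, 0, 1} : Set ℤ)) →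
      ∑ lam ∈ Λ, ε lam • lam = 0 → ∀ lam ∈ Λ, ε lam = 0) :
    (Λ.card : ℝ) ≤ 4 * ((∑ x, f x * Real.log (f x)) / (Fintype.card G)) / δ ^ 2 := by
  classical
  set N : ℝ := (Fintype.card G : ℝ) with hNdef
  have hN : 0 < N := by
    have := Fintype.card_pos (α := G); positivity
  set F : A → ℂ := fun γ => (∑ x, (f x : ℂ) * (starRingEnd ℂ) (u γ x)) / (Fintype.card G : ℂ)
    with hF
  set a : A → ℝ := fun γ => ‖F γ‖ with ha
  have haδ : ∀ γ ∈ Λ, δ < a γ := hΛspec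
  have hapos : ∀ γ ∈ Λ, 0 < a γ := fun γ h => hδ.trans (haδ γ h)
  set c : A → ℂ := fun γ => F γ / (a γ : ℂ) with hc
  set r : A → G → ℝ := fun γ x => (c γ * u γ x).re with hr
  have habs_c : ∀ γ ∈ Λ, ‖c γ‖ = 1 := by
    intro γ h
    rw [hc]
    simp only [norm_div, Complex.norm_real, Real.norm_eq_abs, abs_of_pos (hapos γ h)]
    exact div_self (hapos γ h).ne'
  have hr1 : ∀ γ ∈ Λ, ∀ x, |r γ x| ≤ 1 := by
    intro γ h x
    calc |r γ x| ≤ ‖c γ * u γ x‖ := Complex.abs_re_le_norm _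
      _ = 1 := by rw [norm_mul, habs_c γ h, hnorm, one_mul]
  set g : G → ℝ := fun x => ∑ γ ∈ Λ, a γ * r γ x with hg
  set S : ℝ := ∑ γ ∈ Λ, a γ ^ 2 with hS
  -- Key 1 : correlation
  have hcorr : ∀ γ ∈ Λ, ∑ x, f x * r γ x = a γ * N := by
    intro γ hγ
    have e1 : ∀ x : G, f x * r γ x = ((f x : ℂ) * (c γ * u γ x)).re := by
      intro x; simp [hr, Complex.mul_re]
    have e2 : ∑ x, (f x : ℂ) * (c γ * u γ x) = c γ * ∑ x, (f x : ℂ) * u γ x := by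
      rw [Finset.mul_sum]; exact Finset.sum_congr rfl fun x _ => by ring
    have e3 : ∑ x, (f x : ℂ) * u γ x
        = (starRingEnd ℂ) (∑ x, (f x : ℂ) * (starRingEnd ℂ) (u γ x)) := by
      rw [map_sum]
      exact Finset.sum_congr rfl fun x _ => by
        rw [map_mul, Complex.conj_conj, Complex.conj_ofReal]
    have e4 : (∑ x, (f x : ℂ) * (starRingEnd ℂ) (u γ x)) = F γ * (Fintype.card G : ℂ) := by
      rw [hF]
      field_simp
    have e5 : c γ * (starRingEnd ℂ) (F γ) = ((a γ : ℝ) : ℂ) := by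
      rw [hc, div_mul_eq_mul_div, Complex.mul_conj, ← Complex.sq_norm,
        ← Complex.ofReal_div]
      congr 1
      have haa : ‖F γ‖ = a γ := rfl
      rw [haa, sq, mul_div_assoc, div_self (hapos γ hγ).ne', mul_one]
    calc ∑ x, f x * r γ x = (∑ x, (f x : ℂ) * (c γ * u γ x)).re := by
          rw [Complex.re_sum]; exact Finset.sum_congr rfl fun x _ => e1 x
      _ = (c γ * (starRingEnd ℂ) (F γ) * (Fintype.card G : ℂ)).re := by
          rw [e2, e3, e4, map_mul,
            show (starRingEnd ℂ) ((Fintype.card G : ℕ) : ℂ) = ((Fintype.card G : ℕ) : ℂ)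
              from by simp]
          congr 1
          ring
      _ = a γ * N := by
          rw [e5]
          push_cast
          rw [← Complex.ofReal_natCast, ← Complex.ofReal_mul, Complex.ofReal_re]
  have key1 : ∑ x, f x * g x = N * S := by
    calc ∑ x, f x * g x = ∑ x, ∑ γ ∈ Λ, a γ * (f x * r γ x) := by
          refine Finset.sum_congr rfl fun x _ => ?_
          rw [hg, Finset.mul_sum]
          exact Finset.sum_congr rfl fun γ _ => by ring
      _ = ∑ γ ∈ Λ, a γ * ∑ x, f x * r γ x := by
          rw [Finset.sum_comm]
          exact Finset.sum_congr rfl fun γ _ => by rw [Finset.mul_sum]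
      _ = ∑ γ ∈ Λ, a γ * (a γ * N) := Finset.sum_congr rfl fun γ hγ => by rw [hcorr γ hγ]
      _ = N * S := by rw [hS, Finset.mul_sum]; exact Finset.sum_congr rfl fun γ _ => by ring
  -- Key 2 : subgaussian bound
  have hreal : ∑ x, ∏ γ ∈ Λ, (Real.cosh (a γ) + r γ x * Real.sinh (a γ))
      = N * ∏ γ ∈ Λ, Real.cosh (a γ) := by
    have hE := expand_sum u hmul hone horth Λ hdis
      (fun γ => (Real.cosh (a γ) : ℂ))
      (fun γ => ((Real.sinh (a γ) / 2 : ℝ) : ℂ) * c γ)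
      (fun γ => ((Real.sinh (a γ) / 2 : ℝ) : ℂ) * (starRingEnd ℂ) (c γ))
    have hfac2 : ∀ (γ : A) (x : G),
        ((Real.cosh (a γ) : ℂ) + ((Real.sinh (a γ) / 2 : ℝ) : ℂ) * c γ * u γ x
          + ((Real.sinh (a γ) / 2 : ℝ) : ℂ) * (starRingEnd ℂ) (c γ) * u (-γ) x)
        = ((Real.cosh (a γ) + r γ x * Real.sinh (a γ) : ℝ) : ℂ) := by
      intro γ x
      rw [hconj, mul_assoc, mul_assoc, ← map_mul, add_assoc, ← mul_add, Complex.add_conj]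
      have hrr : (c γ * u γ x).re = r γ x := rfl
      rw [hrr]
      push_cast
      ring
    rw [Finset.sum_congr rfl (fun x _ => Finset.prod_congr rfl fun γ _ => hfac2 γ x)] at hE
    have cast_eq : ∑ x : G, ∏ γ ∈ Λ,
        ((Real.cosh (a γ) + r γ x * Real.sinh (a γ) : ℝ) : ℂ)
        = ((∑ x : G, ∏ γ ∈ Λ, (Real.cosh (a γ) + r γ x * Real.sinh (a γ)) : ℝ) : ℂ) := by
      push_cast
      rfl
    rw [cast_eq] at hE
    have rhs_eq : (Fintype.card G : ℂ) * ∏ γ ∈ Λ, (Real.cosh (a γ) : ℂ)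
        = ((N * ∏ γ ∈ Λ, Real.cosh (a γ) : ℝ) : ℂ) := by
      push_cast
      rfl
    rw [rhs_eq] at hE
    exact_mod_cast hE
  have key2 : ∑ x, Real.exp (g x) ≤ N * Real.exp (S / 2) := by
    have hpt : ∀ x : G, Real.exp (g x)
        ≤ ∏ γ ∈ Λ, (Real.cosh (a γ) + r γ x * Real.sinh (a γ)) := by
      intro x
      rw [hg, Real.exp_sum]
      exact Finset.prod_le_prod (fun γ _ => (Real.exp_pos _).le)
        (fun γ hγ => exp_mul_le_cosh (a γ) (r γ x) (hr1 γ hγ x))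
    have hcosh : ∏ γ ∈ Λ, Real.cosh (a γ) ≤ Real.exp (S / 2) := by
      calc ∏ γ ∈ Λ, Real.cosh (a γ) ≤ ∏ γ ∈ Λ, Real.exp (a γ ^ 2 / 2) :=
            Finset.prod_le_prod (fun γ _ => (Real.cosh_pos _).le)
              (fun γ _ => Real.cosh_le_exp_half_sq (a γ))
        _ = Real.exp (∑ γ ∈ Λ, a γ ^ 2 / 2) := (Real.exp_sum _ _).symm
        _ = Real.exp (S / 2) := by rw [hS, Finset.sum_div]
    calc ∑ x, Real.exp (g x)
        ≤ ∑ x : G, ∏ γ ∈ Λ, (Real.cosh (a γ) + r γ x * Real.sinh (a γ)) :=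
          Finset.sum_le_sum fun x _ => hpt x
      _ = N * ∏ γ ∈ Λ, Real.cosh (a γ) := hreal
      _ ≤ N * Real.exp (S / 2) := mul_le_mul_of_nonneg_left hcosh hN.le
  -- Key 3 : Gibbs variational principle
  set Eg : ℝ := ∑ x, Real.exp (g x) with hEg
  have hEgpos : 0 < Eg :=
    Finset.sum_pos (fun x _ => Real.exp_pos _) Finset.univ_nonempty
  set L : ℝ := Real.log (Eg / N) with hL
  have hfN : ∑ x, f x = N := by
    field_simp at hf1
    linarith [hf1]
  have key3 : ∑ x, f x * g x ≤ (∑ x, f x * Real.log (f x)) + L * N := by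
    have hyoung : ∀ x : G, f x * (g x - L + 1)
        ≤ f x * Real.log (f x) + Real.exp (g x - L) := by
      intro x
      have := young_ineq (f x) (g x - L + 1) (hf0 x)
      simpa using this
    have hsum := Finset.sum_le_sum fun x (_ : x ∈ Finset.univ) => hyoung x
    have lhs_eq : ∑ x, f x * (g x - L + 1)
        = (∑ x, f x * g x) + (1 - L) * ∑ x, f x := by
      rw [Finset.mul_sum, ← Finset.sum_add_distrib]
      exact Finset.sum_congr rfl fun x _ => by ring
    have hexpL : ∑ x, Real.exp (g x - L) = N := by
      have : ∀ x : G, Real.exp (g x - L) = Real.exp (g x) / (Eg / N) := by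
        intro x
        rw [Real.exp_sub, hL, Real.exp_log (by positivity)]
      rw [Finset.sum_congr rfl fun x _ => this x, ← Finset.sum_div, ← hEg,
        div_div_eq_mul_div, mul_comm Eg N, mul_div_assoc, div_self hEgpos.ne', mul_one]
    have rhs_eq : ∑ x, (f x * Real.log (f x) + Real.exp (g x - L))
        = (∑ x, f x * Real.log (f x)) + N := by
      rw [Finset.sum_add_distrib, hexpL]
    rw [lhs_eq, rhs_eq, hfN] at hsum
    linarith
  -- entropy is nonnegative
  have hEntpos : 0 ≤ ∑ x, f x * Real.log (f x) := by
    have h1 : ∑ x, (f x - 1) ≤ ∑ x, f x * Real.log (f x) :=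
      Finset.sum_le_sum fun x _ => mul_log_lb (f x) (hf0 x)
    have h2 : ∑ x : G, (f x - 1) = 0 := by
      rw [Finset.sum_sub_distrib, hfN, Finset.sum_const, Finset.card_univ,
        nsmul_eq_mul, mul_one, hNdef, sub_self]
    linarith
  -- L ≤ S / 2
  have hLle : L ≤ S / 2 := by
    have h1 : Eg / N ≤ Real.exp (S / 2) := by
      rw [div_le_iff₀ hN]
      calc Eg ≤ N * Real.exp (S / 2) := key2
        _ = Real.exp (S / 2) * N := mul_comm _ _
    calc L ≤ Real.log (Real.exp (S / 2)) :=
          Real.log_le_log (by positivity) h1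
      _ = S / 2 := Real.log_exp _
  -- combine
  set Ents : ℝ := ∑ x, f x * Real.log (f x) with hEnts
  have hNS : N * S ≤ Ents + (S / 2) * N := by
    calc N * S = ∑ x, f x * g x := key1.symm
      _ ≤ Ents + L * N := key3
      _ ≤ Ents + (S / 2) * N := by
          have := mul_le_mul_of_nonneg_right hLle hN.le
          linarith
  have hShalf : S ≤ 2 * (Ents / N) := by
    rw [← mul_div_assoc, le_div_iff₀ hN]
    nlinarith [hNS]
  have hcard : (Λ.card : ℝ) * δ ^ 2 ≤ S := by
    have : ∀ γ ∈ Λ, δ ^ 2 ≤ a γ ^ 2 := fun γ hγ =>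
      pow_le_pow_left₀ hδ.le (haδ γ hγ).le 2
    calc (Λ.card : ℝ) * δ ^ 2 = ∑ _γ ∈ Λ, δ ^ 2 := by
          rw [Finset.sum_const, nsmul_eq_mul]
      _ ≤ S := Finset.sum_le_sum this
  have hEdiv : 0 ≤ Ents / N := div_nonneg hEntpos hN.le
  rw [le_div_iff₀ (pow_pos hδ 2)]
  linarith [hcard, hShalf, hEdiv]
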